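/- Let (I, μ) be a finite measure space and (Q_n) a sequence of measurable real-valued functions on I, all dominated pointwise in absolute value by an integrable function Q̂. If ∫_I limsup_n Q_n dμ ≤ liminf_n ∫_I Q_n dμ, then Q_n converges in measure to limsup_n Q_n as n → ∞. -/

import Mathlib

open MeasureTheory Filter

/-- If the `Q n` are dominated by an integrable function and
`∫ limsup Qₙ ≤ liminf ∫ Qₙ`, then `Qₙ` converges in measure to `limsup Qₙ`. -/
theorem tendsto_in_measure_of_integral_limsup_le_liminf
    {I : Type*} [MeasurableSpace I] (μ : Measure I) [IsFiniteMeasure μ]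
    (Q : ℕ → I → ℝ) (Qhat : I → ℝ)
    (hQmeas : ∀ n, Measurable (Q n))
    (hdom : ∀ n, ∀ x, |Q n x| ≤ Qhat x)
    (hQhat : Integrable Qhat μ)
    (hineq : ∫ x, limsup (fun n => Q n x) atTop ∂μ ≤
      liminf (fun n => ∫ x, Q n x ∂μ) atTop) :
    ∀ ε > 0, Tendsto
      (fun N => μ {x | ε < |Q N x - limsup (fun n => Q n x) atTop|})
      atTop (nhds 0) := by
  set Qs : I → ℝ := fun x => limsup (fun n => Q n x) atTop with hQs
  -- basic facts
  have hbddA : ∀ x, IsBoundedUnder (· ≤ ·) atTop (fun n => Q n x) := fun x =>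
    isBoundedUnder_of ⟨Qhat x, fun n => (abs_le.1 (hdom n x)).2⟩
  have hbddB : ∀ x, IsBoundedUnder (· ≥ ·) atTop (fun n => Q n x) := fun x =>
    isBoundedUnder_of ⟨-Qhat x, fun n => (abs_le.1 (hdom n x)).1⟩
  have hQs_le : ∀ x, Qs x ≤ Qhat x := fun x =>
    limsup_le_of_le ((hbddB x).isCoboundedUnder_le)
      (Eventually.of_forall fun n => (abs_le.1 (hdom n x)).2)
  have hle_Qs : ∀ x, -Qhat x ≤ Qs x := fun x =>
    le_limsup_of_frequently_le
      (Frequently.of_forall fun n => (abs_le.1 (hdom n x)).1) (hbddA x)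
  have hQs_abs : ∀ x, |Qs x| ≤ Qhat x := fun x =>
    abs_le.2 ⟨hle_Qs x, hQs_le x⟩
  have hQs_meas : Measurable Qs := Measurable.limsup hQmeas
  have hQint : ∀ n, Integrable (Q n) μ := fun n =>
    Integrable.mono' hQhat (hQmeas n).aestronglyMeasurable (ae_of_all _ (hdom n))
  have hQsint : Integrable Qs μ :=
    Integrable.mono' hQhat hQs_meas.aestronglyMeasurable (ae_of_all _ hQs_abs)
  -- b n = ∫ (Q n - Qs)⁺
  set b : ℕ → ℝ := fun n => ∫ x, max (Q n x - Qs x) 0 ∂μ with hbdef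
  have hbint : ∀ n, Integrable (fun x => max (Q n x - Qs x) 0) μ := fun n =>
    Integrable.mono' (hQhat.add hQhat)
      (((hQmeas n).sub hQs_meas).max measurable_const).aestronglyMeasurable
      (ae_of_all _ fun x => by
        simp only [Pi.add_apply, Real.norm_eq_abs]
        rw [abs_of_nonneg (le_max_right _ _)]
        rcases le_total (Q n x - Qs x) 0 with h | h
        · simp [max_eq_right h]
          nlinarith [abs_nonneg (Q 0 x), hdom 0 x]
        · rw [max_eq_left h]
          have h1 := (abs_le.1 (hdom n x)).2
          have h2 := hle_Qs x
          linarith)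
  -- the ENNReal-valued versions
  set g : ℕ → I → ENNReal := fun n x => ENNReal.ofReal (Q n x - Qs x) with hgdef
  have hgmeas : ∀ n, Measurable (g n) := fun n =>
    ENNReal.measurable_ofReal.comp ((hQmeas n).sub hQs_meas)
  have hglimsup : ∀ x, limsup (fun n => g n x) atTop = 0 := by
    intro x
    refine le_antisymm ?_ (zero_le)
    refine ENNReal.le_of_forall_pos_le_add fun ε hε _ => ?_
    rw [zero_add]
    refine limsup_le_of_le (by isBoundedDefault) ?_
    have hlt : Qs x < Qs x + ε := by
      have : (0:ℝ) < ε := hε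
      linarith
    filter_upwards [eventually_lt_of_limsup_lt hlt (hbddA x)] with n hn
    have : Q n x - Qs x ≤ ε := by linarith
    calc g n x ≤ ENNReal.ofReal (ε : ℝ) := ENNReal.ofReal_le_ofReal this
      _ = (ε : ENNReal) := ENNReal.ofReal_coe_nnreal
  have hgbound : ∀ n, g n ≤ᵐ[μ] fun x => ENNReal.ofReal (Qhat x + Qhat x) := by
    intro n
    refine ae_of_all _ fun x => ENNReal.ofReal_le_ofReal ?_
    have h1 := (abs_le.1 (hdom n x)).2
    have h2 := hle_Qs x
    linarith
  have hgfin : ∫⁻ x, ENNReal.ofReal (Qhat x + Qhat x) ∂μ ≠ ⊤ := by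
    have hint : Integrable (fun x => Qhat x + Qhat x) μ := hQhat.add hQhat
    have := hint.hasFiniteIntegral
    rw [hasFiniteIntegral_iff_norm] at this
    refine ne_of_lt (lt_of_le_of_lt ?_ this)
    exact lintegral_mono fun x => ENNReal.ofReal_le_ofReal (le_abs_self _)
  have hgtendsto : Tendsto (fun n => ∫⁻ x, g n x ∂μ) atTop (nhds 0) := by
    have hls : limsup (fun n => ∫⁻ x, g n x ∂μ) atTop = 0 := by
      refine le_antisymm ?_ (zero_le)
      calc limsup (fun n => ∫⁻ x, g n x ∂μ) atTop
          ≤ ∫⁻ x, limsup (fun n => g n x) atTop ∂μ :=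
            limsup_lintegral_le _ hgmeas hgbound hgfin
        _ = 0 := by simp only [hglimsup, lintegral_zero]
    have hli : liminf (fun n => ∫⁻ x, g n x ∂μ) atTop = 0 :=
      le_antisymm (hls ▸ liminf_le_limsup) (zero_le)
    exact tendsto_of_liminf_eq_limsup hli hls
  -- b tends to 0
  have hbrepr : ∀ n, b n = (∫⁻ x, g n x ∂μ).toReal := by
    intro n
    simp only [hbdef]
    rw [integral_eq_lintegral_of_nonneg_ae (f := fun x => max (Q n x - Qs x) 0)
      (ae_of_all _ fun x => le_max_right _ _)
      (((hQmeas n).sub hQs_meas).max measurable_const).aestronglyMeasurable]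
    congr 1
    refine lintegral_congr fun x => ?_
    rw [hgdef]
    rcases le_total (Q n x - Qs x) 0 with h | h
    · simp [max_eq_right h, ENNReal.ofReal_of_nonpos h]
    · rw [max_eq_left h]
  have hb : Tendsto b atTop (nhds 0) := by
    have h2 : b = fun n => (∫⁻ x, g n x ∂μ).toReal := funext hbrepr
    rw [h2]
    exact (ENNReal.tendsto_toReal (a := 0) (by simp)).comp hgtendsto
  -- a n = ∫ (Qs - Q n)⁺
  set a : ℕ → ℝ := fun n => ∫ x, max (Qs x - Q n x) 0 ∂μ with hadef
  have haint : ∀ n, Integrable (fun x => max (Qs x - Q n x) 0) μ := fun n =>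
    Integrable.mono' (hQhat.add hQhat)
      ((hQs_meas.sub (hQmeas n)).max measurable_const).aestronglyMeasurable
      (ae_of_all _ fun x => by
        simp only [Pi.add_apply, Real.norm_eq_abs]
        rw [abs_of_nonneg (le_max_right _ _)]
        rcases le_total (Qs x - Q n x) 0 with h | h
        · simp [max_eq_right h]
          nlinarith [abs_nonneg (Q 0 x), hdom 0 x]
        · rw [max_eq_left h]
          have h1 := (abs_le.1 (hdom n x)).1
          have h2 := hQs_le x
          linarith)
  have haeq : ∀ n, a n = (∫ x, Qs x ∂μ) - (∫ x, Q n x ∂μ) + b n := by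
    intro n
    calc a n = ∫ x, ((Qs x - Q n x) + max (Q n x - Qs x) 0) ∂μ := by
          refine integral_congr_ae (ae_of_all _ fun x => ?_)
          show max (Qs x - Q n x) 0 = (Qs x - Q n x) + max (Q n x - Qs x) 0
          rcases le_total (Qs x - Q n x) 0 with h | h
          · rw [max_eq_right h, max_eq_left (by linarith)]
            ring
          · rw [max_eq_left h, max_eq_right (by linarith)]
            ring
      _ = (∫ x, Qs x ∂μ) - (∫ x, Q n x ∂μ) + b n := by
          rw [integral_add (f := fun x => Qs x - Q n x) (hQsint.sub (hQint n)) (hbint n),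
            integral_sub hQsint (hQint n)]
  have hanonneg : ∀ n, 0 ≤ a n := fun n =>
    integral_nonneg fun x => le_max_right _ _
  -- a tends to 0
  have hIbdd : IsBoundedUnder (· ≤ ·) atTop (fun n => ∫ x, Q n x ∂μ) := by
    refine isBoundedUnder_of ⟨∫ x, Qhat x ∂μ, fun n => ?_⟩
    refine integral_mono (hQint n) hQhat fun x => ?_
    exact le_trans (le_abs_self _) (hdom n x)
  have hIbddBelow : IsBoundedUnder (· ≥ ·) atTop (fun n => ∫ x, Q n x ∂μ) := by
    refine isBoundedUnder_of ⟨-∫ x, Qhat x ∂μ, fun n => ?_⟩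
    rw [← integral_neg]
    refine integral_mono (hQhat.neg) (hQint n) fun x => ?_
    have := (abs_le.1 (hdom n x)).1
    simpa using this
  have ha : Tendsto a atTop (nhds 0) := by
    rw [Metric.tendsto_atTop]
    intro ε hε
    have h1 : ∀ᶠ n in atTop, b n < ε / 2 := by
      have := Metric.tendsto_atTop.1 hb (ε / 2) (by linarith)
      obtain ⟨N, hN⟩ := this
      refine eventually_atTop.2 ⟨N, fun n hn => ?_⟩
      have := hN n hn
      rw [Real.dist_eq, sub_zero] at this
      exact lt_of_abs_lt this
    have h2 : ∀ᶠ n in atTop, (∫ x, Qs x ∂μ) - ε / 2 < ∫ x, Q n x ∂μ := by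
      refine eventually_lt_of_lt_liminf ?_ hIbddBelow
      calc (∫ x, Qs x ∂μ) - ε / 2 < ∫ x, Qs x ∂μ := by linarith
        _ ≤ liminf (fun n => ∫ x, Q n x ∂μ) atTop := hineq
    obtain ⟨N, hN⟩ := eventually_atTop.1 (h1.and h2)
    refine ⟨N, fun n hn => ?_⟩
    obtain ⟨hb', hq'⟩ := hN n hn
    rw [Real.dist_eq, sub_zero, abs_of_nonneg (hanonneg n), haeq n]
    linarith
  -- ∫ |Q n - Qs| → 0
  have hc : Tendsto (fun n => ∫ x, |Q n x - Qs x| ∂μ) atTop (nhds 0) := by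
    have hrepr : ∀ n, (∫ x, |Q n x - Qs x| ∂μ) = b n + a n := by
      intro n
      rw [hbdef, hadef, ← integral_add (hbint n) (haint n)]
      refine integral_congr_ae (ae_of_all _ fun x => ?_)
      show |Q n x - Qs x| = max (Q n x - Qs x) 0 + max (Qs x - Q n x) 0
      rcases le_total (Q n x - Qs x) 0 with h | h
      · rw [abs_of_nonpos h, max_eq_right h, max_eq_left (by linarith)]
        ring
      · rw [abs_of_nonneg h, max_eq_left h, max_eq_right (by linarith)]
        ring
    simp only [hrepr]
    simpa using hb.add ha
  -- eLpNorm convergence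
  have heLp : Tendsto (fun n => eLpNorm (Q n - Qs) 1 μ) atTop (nhds 0) := by
    have hrepr : ∀ n, eLpNorm (Q n - Qs) 1 μ =
        ENNReal.ofReal (∫ x, |Q n x - Qs x| ∂μ) := by
      intro n
      rw [eLpNorm_one_eq_lintegral_enorm,
        ← ofReal_integral_norm_eq_lintegral_enorm ((hQint n).sub hQsint)]
      simp [Real.norm_eq_abs]
    simp only [hrepr]
    have := (ENNReal.continuous_ofReal.tendsto 0).comp hc
    simpa [Function.comp_def] using this
  have hTIM : TendstoInMeasure μ Q atTop Qs :=
    tendstoInMeasure_of_tendsto_eLpNorm (p := 1) one_ne_zero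
      (fun n => (hQmeas n).aestronglyMeasurable) hQs_meas.aestronglyMeasurable heLp
  intro ε hε
  refine tendsto_of_tendsto_of_tendsto_of_le_of_le tendsto_const_nhds (tendstoInMeasure_iff_dist.1 hTIM ε hε)
    (fun n => zero_le) (fun n => measure_mono ?_)
  intro x hx
  simp only [Set.mem_setOf_eq] at hx ⊢
  rw [Real.dist_eq]
  exact le_of_lt hx
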